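/- arXiv:2103.00551 — 2 statements merged into one kernel-verified Lean document; each statement's English description precedes it below -/
import Mathlib

section
/- Let u, b : ℝ² → ℝ² be smooth with div u = 0 and -Δb + (u·∇)b - (b·∇)u = 0 pointwise on ℝ², and let ψ : ℝ² → ℝ be a smooth function with b = ∇⊥ψ. Then there exists a constant c₀ ∈ ℝ such that -Δψ + u·∇ψ = c₀ everywhere on ℝ²; equivalently, ∇⊥(-Δψ + u·∇ψ) = 0 on ℝ². -/
open MeasureTheory Metric

noncomputable section

abbrev E2 : Type := EuclideanSpace ℝ (Fin 2)

/-- Partial derivative `∂ᵢ f` of a scalar function on `ℝ²`. -/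
def pd (f : E2 → ℝ) (i : Fin 2) (x : E2) : ℝ :=
  fderiv ℝ f x (EuclideanSpace.single i 1)

/-- Partial derivative `∂ᵢ uⱼ` of a vector field on `ℝ²`. -/
def pdv (u : E2 → E2) (i j : Fin 2) (x : E2) : ℝ :=
  pd (fun y => u y j) i x

/-- Laplacian of a scalar function on `ℝ²`. -/
def lap (f : E2 → ℝ) (x : E2) : ℝ :=
  pd (pd f 0) 0 x + pd (pd f 1) 1 x

/-- `|∇f|²` for a scalar function. -/
def gradSq (f : E2 → ℝ) (x : E2) : ℝ := (pd f 0 x)^2 + (pd f 1 x)^2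

/-- `|∇u|²` for a vector field: sum of squares of all first-order partials. -/
def gradSqV (u : E2 → E2) (x : E2) : ℝ := ∑ i, ∑ j, (pdv u i j x)^2

/-- Drift term `u·∇f`. -/
def advect (u : E2 → E2) (f : E2 → ℝ) (x : E2) : ℝ :=
  u x 0 * pd f 0 x + u x 1 * pd f 1 x

end

section helpers

lemma sm_diff {f : E2 → ℝ} (hf : ContDiff ℝ (⊤:ℕ∞) f) (x : E2) :
    DifferentiableAt ℝ f x :=
  (hf.differentiable (by simp)) x

lemma pd_smooth {f : E2 → ℝ} (hf : ContDiff ℝ (⊤:ℕ∞) f) (i : Fin 2) :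
    ContDiff ℝ (⊤:ℕ∞) (pd f i) :=
  (hf.fderiv_right (m := (⊤:ℕ∞)) (by exact_mod_cast le_rfl)).clm_apply contDiff_const

lemma pd_comm {f : E2 → ℝ} (hf : ContDiff ℝ (⊤:ℕ∞) f) (i j : Fin 2) (x : E2) :
    pd (pd f i) j x = pd (pd f j) i x := by
  have hd : ∀ y, HasFDerivAt f (fderiv ℝ f y) y := fun y => (sm_diff hf y).hasFDerivAt
  have h2 : HasFDerivAt (fderiv ℝ f) (fderiv ℝ (fderiv ℝ f) x) x :=
    (((hf.fderiv_right (m := (⊤:ℕ∞)) (by exact_mod_cast le_rfl)).differentiable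
      (by simp)) x).hasFDerivAt
  have hsymm := second_derivative_symmetric hd h2 (EuclideanSpace.single i 1)
    (EuclideanSpace.single j 1)
  have key : ∀ k l : Fin 2, pd (pd f k) l x
      = fderiv ℝ (fderiv ℝ f) x (EuclideanSpace.single l 1) (EuclideanSpace.single k 1) := by
    intro k l
    have := (h2.clm_apply (hasFDerivAt_const (EuclideanSpace.single k (1:ℝ)) x)).fderiv
    show fderiv ℝ (fun y => fderiv ℝ f y (EuclideanSpace.single k 1)) x
      (EuclideanSpace.single l 1) = _
    rw [this]; simp
  rw [key, key, hsymm]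

lemma pd_comm_fun {f : E2 → ℝ} (hf : ContDiff ℝ (⊤:ℕ∞) f) (i j : Fin 2) :
    pd (pd f i) j = pd (pd f j) i := funext (pd_comm hf i j)

lemma pd_add {f g : E2 → ℝ} {x : E2} (hf : DifferentiableAt ℝ f x)
    (hg : DifferentiableAt ℝ g x) (i : Fin 2) :
    pd (fun y => f y + g y) i x = pd f i x + pd g i x := by
  unfold pd; rw [fderiv_fun_add hf hg]; rfl

lemma pd_neg (f : E2 → ℝ) (i : Fin 2) (x : E2) :
    pd (fun y => -(f y)) i x = -(pd f i x) := by
  unfold pd; rw [fderiv_fun_neg]; rfl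

lemma pd_neg_fun (f : E2 → ℝ) (i : Fin 2) :
    pd (fun y => -(f y)) i = fun x => -(pd f i x) := funext (pd_neg f i)

lemma pd_mul {f g : E2 → ℝ} {x : E2} (hf : DifferentiableAt ℝ f x)
    (hg : DifferentiableAt ℝ g x) (i : Fin 2) :
    pd (fun y => f y * g y) i x = pd f i x * g x + f x * pd g i x := by
  unfold pd; rw [fderiv_fun_mul hf hg]
  simp [ContinuousLinearMap.add_apply, ContinuousLinearMap.smul_apply]; ring

lemma clm_eq_zero (L : E2 →L[ℝ] ℝ) (h0 : L (EuclideanSpace.single 0 1) = 0)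
    (h1 : L (EuclideanSpace.single 1 1) = 0) : L = 0 := by
  ext v
  have hv : v = v 0 • EuclideanSpace.single 0 1 + v 1 • EuclideanSpace.single 1 1 := by
    ext j; fin_cases j <;> simp [EuclideanSpace.single_apply]
  rw [hv]
  simp [h0, h1]

end helpers

/-- If `div u = 0`, `-Δb + (u·∇)b - (b·∇)u = 0` and `b = ∇⊥ψ`, then the stream
function satisfies `-Δψ + u·∇ψ = c₀` for some constant `c₀`. -/
theorem stream_drift_diffusion (u b : E2 → E2) (ψ : E2 → ℝ)
    (hu : ContDiff ℝ (⊤ : ℕ∞) u) (hb : ContDiff ℝ (⊤ : ℕ∞) b)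
    (hψ : ContDiff ℝ (⊤ : ℕ∞) ψ)
    (hdiv : ∀ x : E2, pdv u 0 0 x + pdv u 1 1 x = 0)
    (hind : ∀ x : E2, ∀ j : Fin 2,
      -(lap (fun y => b y j) x) + advect u (fun y => b y j) x
        - advect b (fun y => u y j) x = 0)
    (hbψ : ∀ x : E2, b x 0 = pd ψ 1 x ∧ b x 1 = -(pd ψ 0 x)) :
    ∃ c₀ : ℝ, ∀ x : E2, -(lap ψ x) + advect u ψ x = c₀ := by
  -- smoothness of components of u
  have hU : ∀ j : Fin 2, ContDiff ℝ (⊤:ℕ∞) (fun y => u y j) := fun j =>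
    (EuclideanSpace.proj (𝕜 := ℝ) j).contDiff.comp hu
  -- smoothness of first/second partials of ψ
  have h1 : ∀ i, ContDiff ℝ (⊤:ℕ∞) (pd ψ i) := pd_smooth hψ
  have h2 : ∀ i j, ContDiff ℝ (⊤:ℕ∞) (pd (pd ψ i) j) := fun i j => pd_smooth (h1 i) j
  -- the function F
  set F : E2 → ℝ := fun x => -(lap ψ x) + advect u ψ x with hFdef
  have hFeq : F = fun x => -(pd (pd ψ 0) 0 x + pd (pd ψ 1) 1 x)
      + (u x 0 * pd ψ 0 x + u x 1 * pd ψ 1 x) := rfl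
  have hFsm : ContDiff ℝ (⊤:ℕ∞) F := by
    rw [hFeq]
    exact (((h2 0 0).add (h2 1 1)).neg).add
      (((hU 0).mul (h1 0)).add ((hU 1).mul (h1 1)))
  -- master formula for pd F j x
  have hpdF : ∀ (j : Fin 2) (x : E2), pd F j x
      = -(pd (pd (pd ψ 0) 0) j x + pd (pd (pd ψ 1) 1) j x)
        + (pdv u j 0 x * pd ψ 0 x + u x 0 * pd (pd ψ 0) j x
          + pdv u j 1 x * pd ψ 1 x + u x 1 * pd (pd ψ 1) j x) := by
    intro j x
    rw [hFeq]
    have d00 := sm_diff (h2 0 0) x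
    have d11 := sm_diff (h2 1 1) x
    have dU0 := sm_diff (hU 0) x
    have dU1 := sm_diff (hU 1) x
    have dp0 := sm_diff (h1 0) x
    have dp1 := sm_diff (h1 1) x
    rw [pd_add (f := fun y => -(pd (pd ψ 0) 0 y + pd (pd ψ 1) 1 y))
      (g := fun y => u y 0 * pd ψ 0 y + u y 1 * pd ψ 1 y) ((d00.add d11).neg) ((dU0.mul dp0).add (dU1.mul dp1)) j]
    rw [show (fun y => -(pd (pd ψ 0) 0 y + pd (pd ψ 1) 1 y))
        = (fun y => -((fun z => pd (pd ψ 0) 0 z + pd (pd ψ 1) 1 z) y)) from rfl,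
      pd_neg, pd_add d00 d11, pd_add (f := fun y => u y 0 * pd ψ 0 y) (g := fun y => u y 1 * pd ψ 1 y)
        (dU0.mul dp0) (dU1.mul dp1),
      pd_mul dU0 dp0, pd_mul dU1 dp1]
    show _ = _ + (pd (fun y => u y 0) j x * pd ψ 0 x + _ + pd (fun y => u y 1) j x * pd ψ 1 x + _)
    ring
  -- b components as derivatives of ψ
  have hb0 : (fun y => b y 0) = pd ψ 1 := funext fun y => (hbψ y).1
  have hb1 : (fun y => b y 1) = fun y => -(pd ψ 0 y) := funext fun y => (hbψ y).2
  -- pd F j = 0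
  have hzero : ∀ (j : Fin 2) (x : E2), pd F j x = 0 := by
    intro j x
    fin_cases j
    · show pd F 0 x = 0
      -- use hind x 1
      have h := hind x 1
      simp only [lap, advect, hb1, pd_neg_fun, pd_neg, (hbψ x).1, (hbψ x).2] at h
      rw [hpdF 0 x]
      rw [pd_comm (h1 1) 1 0 x, pd_comm_fun hψ 1 0]
      have hd := hdiv x
      simp only [pdv] at hd h ⊢
      linear_combination -h + pd ψ 0 x * hd
    · show pd F 1 x = 0
      -- use hind x 0
      have h := hind x 0
      simp only [lap, advect, hb0, (hbψ x).1, (hbψ x).2] at h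
      rw [hpdF 1 x]
      rw [pd_comm (h1 0) 0 1 x, pd_comm_fun hψ 0 1]
      have hd := hdiv x
      simp only [pdv] at hd h ⊢
      linear_combination h + pd ψ 1 x * hd
  -- conclude F is constant
  have hFdiff : Differentiable ℝ F := hFsm.differentiable (by simp)
  have hfz : ∀ x, fderiv ℝ F x = 0 := by
    intro x
    exact clm_eq_zero _ (hzero 0 x) (hzero 1 x)
  exact ⟨F 0, fun x => is_const_of_fderiv_eq_zero hFdiff hfz x 0⟩
end

section
/- Let v be a real-valued function continuous on the closed unit ball of ℝ² and C¹ on the open unit ball B with ∫_B |∇v|² dx < ∞, and suppose that for every r ∈ (0,1) the maximum principle holds on B(0,r): the maximum of v over the closed ball of radius r equals its maximum over the circle ∂B(0,r), and likewise for the minimum. Then there is an absolute constant c > 0 such that for every r ∈ (0,1): sup_{x ∈ B(0,r)} |v(x) - v(0)| ≤ (c / √(-log r)) · (∫_{B ∖ B(0,r)} |∇v|² dx)^{1/2}. -/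
open MeasureTheory Metric

open Real Set

section Auxiliary

/-! ### Auxiliary lemmas for the oscillation lemma -/

/-- Cauchy–Schwarz for interval integrals of continuous functions. -/
lemma cs_interval {f : ℝ → ℝ} (hf : Continuous f) (a T : ℝ) (hT : 0 ≤ T) :
    (∫ t in a..a+T, |f t|)^2 ≤ T * ∫ t in a..a+T, (f t)^2 := by
  rcases eq_or_lt_of_le hT with hT0 | hT0
  · simp [← hT0]
  set I := ∫ t in a..a+T, |f t| with hI
  set Q := ∫ t in a..a+T, (f t)^2 with hQ
  have haT : a ≤ a + T := by linarith
  have hI0 : 0 ≤ I := intervalIntegral.integral_nonneg haT (fun t _ => abs_nonneg _)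
  have hQ0 : 0 ≤ Q := intervalIntegral.integral_nonneg haT (fun t _ => sq_nonneg _)
  have key : ∀ l : ℝ, 0 < l → I ≤ Q/(2*l) + l*T/2 := by
    intro l hl
    have hptwise : ∀ t ∈ Set.Icc a (a+T), |f t| ≤ (f t)^2/(2*l) + l/2 := by
      intro t _
      have h1 : 0 ≤ (|f t| - l)^2 := sq_nonneg _
      have h2 : |f t|^2 = (f t)^2 := sq_abs _
      have h3 : (0:ℝ) < 2*l := by linarith
      rw [div_add_div _ _ (ne_of_gt h3) (by norm_num : (2:ℝ) ≠ 0), le_div_iff₀ (by linarith)]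
      nlinarith
    have hint1 : IntervalIntegrable (fun t => |f t|) volume a (a+T) :=
      (hf.abs).intervalIntegrable _ _
    have hint2 : IntervalIntegrable (fun t => (f t)^2/(2*l) + l/2) volume a (a+T) :=
      (((hf.pow 2).div_const _).add continuous_const).intervalIntegrable _ _
    have := intervalIntegral.integral_mono_on haT hint1 hint2 hptwise
    calc I ≤ ∫ t in a..a+T, ((f t)^2/(2*l) + l/2) := this
      _ = Q/(2*l) + l*T/2 := by
          rw [intervalIntegral.integral_add (f := fun t => (f t)^2/(2*l)) (g := fun _ => l/2) (((hf.pow 2).div_const _).intervalIntegrable _ _)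
            (continuous_const.intervalIntegrable _ _)]
          rw [intervalIntegral.integral_div, intervalIntegral.integral_const]
          simp only [add_sub_cancel_left, smul_eq_mul]
          ring_nf
          rw [hQ]; ring
  refine le_of_forall_pos_le_add (fun eps heps => ?_)
  set d := eps / T with hd
  have hd0 : 0 < d := div_pos heps hT0
  set l := Real.sqrt ((Q + d)/T) with hl
  have hl0 : 0 < l := Real.sqrt_pos.2 (div_pos (by linarith) hT0)
  have hlsq : l^2 = (Q+d)/T := Real.sq_sqrt (le_of_lt (div_pos (by linarith) hT0))
  have hIl : I ≤ l * T := by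
    have h := key l hl0
    have hQle : Q ≤ l^2 * T := by
      rw [hlsq]; rw [div_mul_cancel₀ _ (ne_of_gt hT0)]; linarith
    have h2 : Q/(2*l) ≤ l*T/2 := by
      rw [div_le_div_iff₀ (by linarith) (by norm_num)]
      nlinarith
    linarith
  have hsq : I^2 ≤ (l*T)^2 := by
    have := pow_le_pow_left₀ hI0 hIl 2
    simpa using this
  have : (l*T)^2 = T*Q + eps := by
    have : l^2 * T = Q + d := by rw [hlsq]; field_simp
    have hdT : d * T = eps := by rw [hd]; field_simp
    nlinarith
  linarith

/-- The identification of `ℝ × ℝ` with `E2`, as a measurable equivalence. -/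
noncomputable def P2 : ℝ × ℝ ≃ᵐ E2 :=
  (MeasurableEquiv.finTwoArrow.symm.trans (MeasurableEquiv.toLp 2 (Fin 2 → ℝ)))

lemma P2_mp : MeasurePreserving P2 :=
  ((EuclideanSpace.volume_preserving_symm_measurableEquiv_toLp (Fin 2)).symm _).comp
    ((volume_preserving_finTwoArrow ℝ).symm _)

lemma P2_apply (p : ℝ × ℝ) : P2 p = ![p.1, p.2] := rfl

lemma P2_smul (p : ℝ × ℝ) :
    P2 p = p.1 • EuclideanSpace.single (0 : Fin 2) (1:ℝ) + p.2 • EuclideanSpace.single 1 1 := by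
  ext i
  fin_cases i <;> simp [P2_apply, EuclideanSpace.single_apply]

lemma P2_norm (p : ℝ × ℝ) : ‖P2 p‖ = Real.sqrt (p.1^2 + p.2^2) := by
  rw [EuclideanSpace.norm_eq]
  congr 1
  rw [Fin.sum_univ_two]
  simp [P2_apply, sq_abs]

lemma gamma_norm (s θ : ℝ) (hs : 0 ≤ s) : ‖P2 (s*Real.cos θ, s*Real.sin θ)‖ = s := by
  rw [P2_norm]
  have : (s*Real.cos θ)^2 + (s*Real.sin θ)^2 = s^2 := by
    have := Real.sin_sq_add_cos_sq θ; nlinarith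
  rw [this, Real.sqrt_sq hs]

lemma polar_target_eq : polarCoord.target = Ioi (0:ℝ) ×ˢ Ioo (-π) π := rfl

lemma polar_symm_eq (p : ℝ × ℝ) :
    polarCoord.symm p = (p.1 * Real.cos p.2, p.1 * Real.sin p.2) := rfl

/-- Every point of the sphere of radius `s > 0` is `γ s θ` for some `θ ∈ (-π, π]`. -/
lemma sphere_param {s : ℝ} (hs : 0 < s) {p : E2} (hp : p ∈ sphere (0:E2) s) :
    ∃ θ : ℝ, -π < θ ∧ θ ≤ π ∧ p = P2 (s*Real.cos θ, s*Real.sin θ) := by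
  have hnorm : ‖p‖ = s := by simpa using hp
  set a := p 0 with ha
  set b := p 1 with hb
  have hab : Real.sqrt (a^2 + b^2) = s := by
    rw [← hnorm, EuclideanSpace.norm_eq, Fin.sum_univ_two]
    simp [sq_abs, ha, hb]
  have hab2 : a^2 + b^2 = s^2 := by
    have h0 : 0 ≤ a^2 + b^2 := by positivity
    nlinarith [Real.sq_sqrt h0, hab]
  set z : ℂ := ⟨a, b⟩ with hz
  have habs : ‖z‖ = s := by
    rw [Complex.norm_def, Complex.normSq_mk]
    rw [show a*a+b*b = a^2+b^2 by ring, hab2, Real.sqrt_sq hs.le]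
  have hz0 : z ≠ 0 := by
    intro h
    rw [h] at habs; simp at habs; linarith [habs ▸ hs]
  refine ⟨z.arg, Complex.neg_pi_lt_arg z, Complex.arg_le_pi z, ?_⟩
  have hre : s * Real.cos z.arg = a := by
    rw [← habs]; exact Complex.norm_mul_cos_arg z
  have him : s * Real.sin z.arg = b := by
    rw [← habs]; exact Complex.norm_mul_sin_arg z
  ext i
  fin_cases i
  · simpa [P2_apply] using hre.symm
  · simpa [P2_apply] using him.symm

/-- Continuity of `θ ↦ |∇v|²` along a circle inside the unit ball. -/
lemma circle_cont (v : E2 → ℝ) (hv : ContDiffOn ℝ 1 v (ball (0:E2) 1))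
    {s : ℝ} (hs0 : 0 < s) (hs1 : s < 1) :
    Continuous (fun θ => gradSq v (P2 (s*Real.cos θ, s*Real.sin θ))) := by
  set γ : ℝ → E2 := fun θ => P2 (s*Real.cos θ, s*Real.sin θ) with hγ
  have hγmem : ∀ θ, γ θ ∈ ball (0:E2) 1 := by
    intro θ
    rw [mem_ball_zero_iff, gamma_norm s θ hs0.le]
    exact hs1
  have hγeq : ∀ θ, γ θ = (s*Real.cos θ) • EuclideanSpace.single (0 : Fin 2) (1:ℝ)
      + (s*Real.sin θ) • EuclideanSpace.single 1 1 := fun θ => P2_smul _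
  have hγc : Continuous γ := by
    have : Continuous fun θ => (s*Real.cos θ) • EuclideanSpace.single (0 : Fin 2) (1:ℝ)
        + (s*Real.sin θ) • EuclideanSpace.single 1 1 := by fun_prop
    simpa [funext hγeq] using this
  have hfdc : ContinuousOn (fderiv ℝ v) (ball (0:E2) 1) :=
    hv.continuousOn_fderiv_of_isOpen isOpen_ball le_rfl
  have hpdc : ∀ i : Fin 2, Continuous (fun θ => pd v i (γ θ)) := by
    intro i
    have h1 : ContinuousOn (fun x => pd v i x) (ball (0:E2) 1) :=
      (ContinuousLinearMap.apply ℝ ℝ (EuclideanSpace.single i (1:ℝ))).continuous.comp_continuousOn hfdc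
    exact h1.comp_continuous hγc hγmem
  have := hpdc 0; have := hpdc 1
  simp only [gradSq]
  fun_prop

/-- Courant–Lebesgue circle estimate. -/
lemma circle_bound (v : E2 → ℝ) (hv : ContDiffOn ℝ 1 v (ball (0:E2) 1))
    {s : ℝ} (hs0 : 0 < s) (hs1 : s < 1) {p q : E2}
    (hp : p ∈ sphere (0:E2) s) (hq : q ∈ sphere (0:E2) s) :
    (v p - v q)^2 ≤ (2*π) * s^2 *
      ∫ θ in (-π)..π, gradSq v (P2 (s*Real.cos θ, s*Real.sin θ)) := by
  set γ : ℝ → E2 := fun θ => P2 (s*Real.cos θ, s*Real.sin θ) with hγ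
  have hγmem : ∀ θ, γ θ ∈ ball (0:E2) 1 := by
    intro θ
    rw [mem_ball_zero_iff, gamma_norm s θ hs0.le]
    exact hs1
  have hvd : ∀ θ, DifferentiableAt ℝ v (γ θ) := fun θ =>
    (hv.differentiableOn one_ne_zero).differentiableAt (isOpen_ball.mem_nhds (hγmem θ))
  set e0 : E2 := EuclideanSpace.single 0 1 with he0
  set e1 : E2 := EuclideanSpace.single 1 1 with he1
  set γ' : ℝ → E2 := fun θ => (-(s*Real.sin θ)) • e0 + (s*Real.cos θ) • e1 with hγ'
  have hγeq : ∀ θ, γ θ = (s*Real.cos θ) • e0 + (s*Real.sin θ) • e1 := fun θ => P2_smul _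
  have hγd : ∀ θ, HasDerivAt γ (γ' θ) θ := by
    intro θ
    have h1 : HasDerivAt (fun t : ℝ => s * Real.cos t) (-(s*Real.sin θ)) θ := by
      simpa [mul_comm, neg_mul, mul_neg] using (Real.hasDerivAt_cos θ).const_mul s
    have h2 : HasDerivAt (fun t : ℝ => s * Real.sin t) (s*Real.cos θ) θ := by
      simpa [mul_comm] using (Real.hasDerivAt_sin θ).const_mul s
    have h3 := (h1.smul_const e0).add (h2.smul_const e1)
    have h4 : HasDerivAt (fun t => (s*Real.cos t) • e0 + (s*Real.sin t) • e1)
        (γ' θ) θ := by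
      exact h3
    exact (funext hγeq : γ = _) ▸ h4
  set ψ : ℝ → ℝ := fun θ => fderiv ℝ v (γ θ) (γ' θ) with hψ
  have hφd : ∀ θ, HasDerivAt (fun t => v (γ t)) (ψ θ) θ := by
    intro θ
    exact ((hvd θ).hasFDerivAt.comp_hasDerivAt θ (hγd θ))
  have hψformula : ∀ θ, ψ θ = (-(s*Real.sin θ)) * pd v 0 (γ θ) + (s*Real.cos θ) * pd v 1 (γ θ) := by
    intro θ
    simp only [hψ, hγ', pd, map_add, ContinuousLinearMap.map_smul, smul_eq_mul, he0, he1]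
  have hψsq : ∀ θ, (ψ θ)^2 ≤ s^2 * gradSq v (γ θ) := by
    intro θ
    rw [hψformula θ]
    set x := pd v 0 (γ θ); set y := pd v 1 (γ θ)
    have h1 := Real.sin_sq_add_cos_sq θ
    have h2 := sq_nonneg ((-(s*Real.sin θ))*y - (s*Real.cos θ)*x)
    simp only [gradSq]
    nlinarith
  have hfdc : ContinuousOn (fderiv ℝ v) (ball (0:E2) 1) :=
    hv.continuousOn_fderiv_of_isOpen isOpen_ball le_rfl
  have hγc : Continuous γ := by
    have : Continuous fun θ => (s*Real.cos θ) • e0 + (s*Real.sin θ) • e1 := by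
      fun_prop
    simpa [funext hγeq] using this
  have hpdc : ∀ i : Fin 2, Continuous (fun θ => pd v i (γ θ)) := by
    intro i
    have h1 : ContinuousOn (fun x => pd v i x) (ball (0:E2) 1) := by
      have := (ContinuousLinearMap.apply ℝ ℝ (EuclideanSpace.single i (1:ℝ))).continuous.comp_continuousOn hfdc
      exact this
    exact h1.comp_continuous hγc hγmem
  have hψc : Continuous ψ := by
    have : Continuous fun θ => (-(s*Real.sin θ)) * pd v 0 (γ θ) + (s*Real.cos θ) * pd v 1 (γ θ) := by
      have := hpdc 0; have := hpdc 1; fun_prop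
    simpa [funext hψformula] using this
  have hGc : Continuous (fun θ => gradSq v (γ θ)) := by
    have := hpdc 0; have := hpdc 1
    simp only [gradSq]
    fun_prop
  obtain ⟨α, hα1, hα2, hpα⟩ := sphere_param hs0 hp
  obtain ⟨β, hβ1, hβ2, hqβ⟩ := sphere_param hs0 hq
  set α' : ℝ := if β ≤ α then α else α + 2*π with hα'
  have hπ := Real.pi_pos
  have hβα'1 : β ≤ α' := by
    rw [hα']; split_ifs with h
    · exact h
    · linarith
  have hβα'2 : α' ≤ β + 2*π := by
    rw [hα']; split_ifs with h
    · linarith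
    · push_neg at h; linarith
  have hγper : ∀ θ, γ (θ + 2*π) = γ θ := by
    intro θ
    simp only [hγ, Real.cos_add_two_pi, Real.sin_add_two_pi]
  have hφα' : v (γ α') = v (γ α) := by
    rw [hα']; split_ifs with h
    · rfl
    · rw [hγper α]
  have hftc : ∫ θ in β..α', ψ θ = v (γ α') - v (γ β) :=
    intervalIntegral.integral_eq_sub_of_hasDerivAt (fun t _ => hφd t)
      (hψc.intervalIntegrable _ _)
  set I : ℝ := ∫ θ in β..β+2*π, |ψ θ| with hIdef
  have habs : |v p - v q| ≤ I := by
    have h1 : ∫ θ in β..α', ψ θ ≤ ∫ θ in β..α', |ψ θ| :=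
      intervalIntegral.integral_mono_on hβα'1 (hψc.intervalIntegrable _ _)
        ((hψc.abs).intervalIntegrable _ _) (fun t _ => le_abs_self _)
    have h1' : -(∫ θ in β..α', ψ θ) ≤ ∫ θ in β..α', |ψ θ| := by
      rw [← intervalIntegral.integral_neg]
      exact intervalIntegral.integral_mono_on hβα'1 ((hψc.neg).intervalIntegrable _ _)
        ((hψc.abs).intervalIntegrable _ _) (fun t _ => neg_le_abs _)
    have h2 : ∫ θ in β..α', |ψ θ| ≤ I := by
      rw [hIdef, ← intervalIntegral.integral_add_adjacent_intervals
        ((hψc.abs).intervalIntegrable β α') ((hψc.abs).intervalIntegrable α' (β+2*π))]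
      have : 0 ≤ ∫ θ in α'..β+2*π, |ψ θ| :=
        intervalIntegral.integral_nonneg hβα'2 (fun t _ => abs_nonneg _)
      linarith
    have heq : v p - v q = ∫ θ in β..α', ψ θ := by
      rw [hftc, hφα', hpα, hqβ]
    rw [abs_le]
    constructor
    · rw [heq] at *; linarith
    · rw [heq] at *; linarith
  have hcs : I^2 ≤ (2*π) * ∫ θ in β..β+2*π, (ψ θ)^2 :=
    cs_interval hψc β (2*π) (by linarith)
  have hψper : Function.Periodic (fun θ => (ψ θ)^2) (2*π) := by
    intro θ
    simp only [hψformula, hγper θ, Real.cos_add_two_pi, Real.sin_add_two_pi]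
  have hper_eq : ∫ θ in β..β+2*π, (ψ θ)^2 = ∫ θ in (-π)..π, (ψ θ)^2 := by
    have h := hψper.intervalIntegral_add_eq β (-π)
    rw [show -π + 2*π = π by ring] at h
    exact h
  have hmono : ∫ θ in (-π)..π, (ψ θ)^2 ≤ ∫ θ in (-π)..π, s^2 * gradSq v (γ θ) :=
    intervalIntegral.integral_mono_on (by linarith) ((hψc.pow 2).intervalIntegrable _ _)
      ((continuous_const.mul hGc).intervalIntegrable _ _) (fun t _ => hψsq t)
  have hconst : ∫ θ in (-π)..π, s^2 * gradSq v (γ θ)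
      = s^2 * ∫ θ in (-π)..π, gradSq v (γ θ) := by
    exact intervalIntegral.integral_const_mul _ _
  have hfinal : (v p - v q)^2 ≤ I^2 := by
    have h0 : 0 ≤ I := le_trans (abs_nonneg _) habs
    have := abs_le.1 habs
    nlinarith [this.1, this.2, sq_abs (v p - v q)]
  calc (v p - v q)^2 ≤ I^2 := hfinal
    _ ≤ (2*π) * ∫ θ in β..β+2*π, (ψ θ)^2 := hcs
    _ = (2*π) * ∫ θ in (-π)..π, (ψ θ)^2 := by rw [hper_eq]
    _ ≤ (2*π) * (s^2 * ∫ θ in (-π)..π, gradSq v (γ θ)) := by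
        rw [← hconst]
        exact mul_le_mul_of_nonneg_left hmono (by positivity)
    _ = (2*π) * s^2 * ∫ θ in (-π)..π, gradSq v (γ θ) := by ring

/-- Maximum-principle reduction: the oscillation of `v` on `closedBall r` is bounded
by the oscillation on any larger sphere. -/
lemma osc_le (v : E2 → ℝ) (hc : ContinuousOn v (closedBall (0:E2) 1))
    (hmp : ∀ r : ℝ, 0 < r → r < 1 →
        sSup (v '' closedBall (0 : E2) r) = sSup (v '' sphere (0 : E2) r) ∧
        sInf (v '' closedBall (0 : E2) r) = sInf (v '' sphere (0 : E2) r))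
    {r s : ℝ} (hr0 : 0 < r) (hrs : r < s) (hs1 : s < 1) {x : E2}
    (hx : x ∈ closedBall (0:E2) r) :
    ∃ p ∈ sphere (0:E2) s, ∃ q ∈ sphere (0:E2) s, |v x - v 0| ≤ v p - v q := by
  have hs0 : 0 < s := hr0.trans hrs
  have hr1 : r < 1 := hrs.trans hs1
  have hsub_cb : closedBall (0:E2) s ⊆ closedBall (0:E2) 1 :=
    closedBall_subset_closedBall hs1.le
  have hsub_cbr : closedBall (0:E2) r ⊆ closedBall (0:E2) 1 :=
    closedBall_subset_closedBall hr1.le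
  have hsph_cb : sphere (0:E2) s ⊆ closedBall (0:E2) s := sphere_subset_closedBall
  have hsphr_cbs : sphere (0:E2) r ⊆ closedBall (0:E2) s := fun y hy => by
    rw [mem_closedBall]
    rw [mem_sphere] at hy
    rw [hy]; exact hrs.le
  have hsph_ne : (sphere (0:E2) s).Nonempty := NormedSpace.sphere_nonempty.2 hs0.le
  have hvc_sph : ContinuousOn v (sphere (0:E2) s) :=
    hc.mono (hsph_cb.trans hsub_cb)
  obtain ⟨p, hp, hpmax⟩ := (isCompact_sphere (0:E2) s).exists_isMaxOn hsph_ne hvc_sph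
  obtain ⟨q, hq, hqmin⟩ := (isCompact_sphere (0:E2) s).exists_isMinOn hsph_ne hvc_sph
  refine ⟨p, hp, q, hq, ?_⟩
  have hSupS : sSup (v '' sphere (0:E2) s) = v p :=
    IsGreatest.csSup_eq ⟨mem_image_of_mem v hp, by
      rintro y ⟨z, hz, rfl⟩; exact hpmax hz⟩
  have hInfS : sInf (v '' sphere (0:E2) s) = v q :=
    IsLeast.csInf_eq ⟨mem_image_of_mem v hq, by
      rintro y ⟨z, hz, rfl⟩; exact hqmin hz⟩
  have hK : IsCompact (v '' closedBall (0:E2) 1) :=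
    (isCompact_closedBall _ _).image_of_continuousOn hc
  have hbddA : BddAbove (v '' closedBall (0:E2) 1) := hK.bddAbove
  have hbddB : BddBelow (v '' closedBall (0:E2) 1) := hK.bddBelow
  have hbddAr : BddAbove (v '' closedBall (0:E2) r) :=
    hbddA.mono (image_mono (f := v) hsub_cbr)
  have hbddBr : BddBelow (v '' closedBall (0:E2) r) :=
    hbddB.mono (image_mono (f := v) hsub_cbr)
  have hbddAs : BddAbove (v '' closedBall (0:E2) s) :=
    hbddA.mono (image_mono (f := v) hsub_cb)
  have hbddBs : BddBelow (v '' closedBall (0:E2) s) :=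
    hbddB.mono (image_mono (f := v) hsub_cb)
  have hne_r : (v '' sphere (0:E2) r).Nonempty :=
    (NormedSpace.sphere_nonempty.2 hr0.le).image v
  have hchain_up : ∀ y ∈ closedBall (0:E2) r, v y ≤ v p := by
    intro y hy
    calc v y ≤ sSup (v '' closedBall (0:E2) r) := le_csSup hbddAr (mem_image_of_mem v hy)
      _ = sSup (v '' sphere (0:E2) r) := (hmp r hr0 hr1).1
      _ ≤ sSup (v '' closedBall (0:E2) s) :=
          csSup_le_csSup hbddAs hne_r (image_mono (f := v) hsphr_cbs)
      _ = sSup (v '' sphere (0:E2) s) := (hmp s hs0 hs1).1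
      _ = v p := hSupS
  have hchain_dn : ∀ y ∈ closedBall (0:E2) r, v q ≤ v y := by
    intro y hy
    calc v q = sInf (v '' sphere (0:E2) s) := hInfS.symm
      _ = sInf (v '' closedBall (0:E2) s) := ((hmp s hs0 hs1).2).symm
      _ ≤ sInf (v '' sphere (0:E2) r) :=
          csInf_le_csInf hbddBs hne_r (image_mono (f := v) hsphr_cbs)
      _ = sInf (v '' closedBall (0:E2) r) := ((hmp r hr0 hr1).2).symm
      _ ≤ v y := csInf_le hbddBr (mem_image_of_mem v hy)
  have h0mem : (0:E2) ∈ closedBall (0:E2) r := mem_closedBall_self hr0.le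
  rw [abs_le]
  constructor
  · linarith [hchain_up 0 h0mem, hchain_dn x hx]
  · linarith [hchain_up x hx, hchain_dn 0 h0mem]

/-- Polar coordinates lower bound for the annulus energy. -/
lemma energy_lower (g : E2 → ℝ)
    {r : ℝ} (hr0 : 0 < r) (hr1 : r < 1) :
    (∫⁻ p in Ioo r 1 ×ˢ Ioo (-π) π,
        ENNReal.ofReal p.1 * ENNReal.ofReal (g (P2 (polarCoord.symm p))))
      ≤ ∫⁻ y in ball (0:E2) 1 \ ball (0:E2) r, ENNReal.ofReal (g y) := by
  set S : Set (ℝ × ℝ) := Ioo r 1 ×ˢ Ioo (-π) π with hS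
  have hSm : MeasurableSet S := (measurableSet_Ioo).prod measurableSet_Ioo
  set B : ℝ × ℝ → ℝ × ℝ →L[ℝ] ℝ × ℝ := fun p =>
    LinearMap.toContinuousLinearMap (Matrix.toLin (Module.Basis.finTwoProd ℝ) (Module.Basis.finTwoProd ℝ)
      !![Real.cos p.2, -p.1 * Real.sin p.2; Real.sin p.2, p.1 * Real.cos p.2]) with hB
  have hBd : ∀ p ∈ S, HasFDerivWithinAt polarCoord.symm (B p) S p := fun p _ =>
    (hasFDerivAt_polarCoord_symm p).hasFDerivWithinAt
  have hB_det : ∀ p, (B p).det = p.1 := by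
    intro p
    conv_rhs => rw [← one_mul p.1, ← Real.cos_sq_add_sin_sq p.2]
    simp only [hB, neg_mul, LinearMap.det_toContinuousLinearMap, LinearMap.det_toLin,
      Matrix.det_fin_two_of, sub_neg_eq_add]
    ring
  have hSsub : S ⊆ polarCoord.target := by
    rintro ⟨a, b⟩ ⟨ha, hb⟩
    rw [polar_target_eq]
    exact ⟨lt_trans hr0 ha.1, hb⟩
  have hinj : InjOn polarCoord.symm S := by
    have := polarCoord.symm.injOn
    rw [OpenPartialHomeomorph.symm_source] at this
    exact this.mono hSsub
  set g' : ℝ × ℝ → ENNReal := fun y => ENNReal.ofReal (g (P2 y)) with hg'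
  have hcov := lintegral_image_eq_lintegral_abs_det_fderiv_mul volume hSm hBd hinj g'
  have hpoint : ∫⁻ p in S, ENNReal.ofReal |(B p).det| * g' (polarCoord.symm p)
      = ∫⁻ p in S, ENNReal.ofReal p.1 * g' (polarCoord.symm p) := by
    apply setLIntegral_congr_fun hSm
    intro p hp
    dsimp only
    rw [hB_det p, abs_of_pos (lt_trans hr0 hp.1.1)]
  have himg : polarCoord.symm '' S ⊆ P2 ⁻¹' (ball (0:E2) 1 \ ball (0:E2) r) := by
    rintro y ⟨p, hp, rfl⟩
    rw [mem_preimage, polar_symm_eq]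
    have hp1 : 0 < p.1 := lt_trans hr0 hp.1.1
    constructor
    · rw [mem_ball_zero_iff, gamma_norm p.1 p.2 hp1.le]
      exact hp.1.2
    · rw [mem_ball_zero_iff, gamma_norm p.1 p.2 hp1.le]
      exact not_lt.2 hp.1.1.le
  calc ∫⁻ p in S, ENNReal.ofReal p.1 * g' (polarCoord.symm p)
      = ∫⁻ p in S, ENNReal.ofReal |(B p).det| * g' (polarCoord.symm p) := hpoint.symm
    _ = ∫⁻ y in polarCoord.symm '' S, g' y := hcov.symm
    _ ≤ ∫⁻ y in P2 ⁻¹' (ball (0:E2) 1 \ ball (0:E2) r), g' y := lintegral_mono_set himg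
    _ = ∫⁻ y in ball (0:E2) 1 \ ball (0:E2) r, ENNReal.ofReal (g y) := by
        exact P2_mp.setLIntegral_comp_preimage_emb P2.measurableEmbedding
          (fun y => ENNReal.ofReal (g y)) _

end Auxiliary

/-- Oscillation lemma: there is an absolute constant `c > 0` such that for any
`v` continuous on the closed unit ball, `C¹` on the open unit ball with
square-integrable gradient there, and satisfying the maximum principle on every
ball `B(0,r)`, one has
`sup_{B(0,r)} |v - v(0)| ≤ c (−log r)^{-1/2} ‖∇v‖_{L²(B \ B(0,r))}`. -/
theorem oscillation_lemma :
    ∃ c : ℝ, 0 < c ∧ ∀ v : E2 → ℝ,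
      ContinuousOn v (closedBall (0 : E2) 1) →
      ContDiffOn ℝ 1 v (ball (0 : E2) 1) →
      (∫⁻ x in ball (0 : E2) 1, ENNReal.ofReal (gradSq v x)) < ⊤ →
      (∀ r : ℝ, 0 < r → r < 1 →
        sSup (v '' closedBall (0 : E2) r) = sSup (v '' sphere (0 : E2) r) ∧
        sInf (v '' closedBall (0 : E2) r) = sInf (v '' sphere (0 : E2) r)) →
      ∀ r : ℝ, 0 < r → r < 1 → ∀ x ∈ ball (0 : E2) r,
        |v x - v 0| ≤ c / Real.sqrt (-Real.log r) *
          Real.sqrt ((∫⁻ y in ball (0 : E2) 1 \ ball (0 : E2) r,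
            ENNReal.ofReal (gradSq v y)).toReal) := by
  have hπ := Real.pi_pos
  refine ⟨Real.sqrt (2*π), Real.sqrt_pos.2 (by positivity), ?_⟩
  intro v hc hd hE hmp r hr0 hr1 x hx
  set D := |v x - v 0| with hDdef
  have hD0 : 0 ≤ D := abs_nonneg _
  set L := -Real.log r with hLdef
  have hLpos : 0 < L := by rw [hLdef]; linarith [Real.log_neg hr0 hr1]
  have hGnn : ∀ y, 0 ≤ gradSq v y := fun y => add_nonneg (sq_nonneg _) (sq_nonneg _)
  have hGmeas : Measurable (gradSq v) := by
    have h0 := measurable_fderiv_apply_const ℝ v (EuclideanSpace.single (0:Fin 2) (1:ℝ))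
    have h1 := measurable_fderiv_apply_const ℝ v (EuclideanSpace.single (1:Fin 2) (1:ℝ))
    exact (h0.pow_const 2).add (h1.pow_const 2)
  set Einf := ∫⁻ y in ball (0:E2) 1 \ ball (0:E2) r, ENNReal.ofReal (gradSq v y) with hEdef
  have hEfin : Einf ≠ ⊤ := ne_of_lt (lt_of_le_of_lt (lintegral_mono_set diff_subset) hE)
  set Er := Einf.toReal with hErdef
  have hEr0 : 0 ≤ Er := ENNReal.toReal_nonneg
  have hxcb : x ∈ closedBall (0:E2) r := ball_subset_closedBall hx
  -- the joint integrand
  set F : ℝ × ℝ → ENNReal := fun p =>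
    ENNReal.ofReal p.1 * ENNReal.ofReal (gradSq v (P2 (polarCoord.symm p))) with hFdef
  -- per-slice lower bound
  have stepB : ∀ s ∈ Ioo r 1,
      ENNReal.ofReal (D^2/(2*π) * s⁻¹) ≤ ∫⁻ θ in Ioo (-π) π, F (s, θ) := by
    intro s hs
    have hs0 : 0 < s := hr0.trans hs.1
    have hs1 : s < 1 := hs.2
    obtain ⟨p, hp, q, hq, hpq⟩ := osc_le v hc hmp hr0 hs.1 hs1 hxcb
    have hA : D^2 ≤ (2*π) * s^2 * ∫ θ in (-π)..π, gradSq v (P2 (s*Real.cos θ, s*Real.sin θ)) := by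
      have hcb := circle_bound v hd hs0 hs1 hp hq
      have hD2 : D^2 ≤ (v p - v q)^2 := by nlinarith
      linarith
    have hGc := circle_cont v hd hs0 hs1
    have hFs : ∀ θ : ℝ, F (s, θ) = ENNReal.ofReal (s * gradSq v (P2 (s*Real.cos θ, s*Real.sin θ))) := by
      intro θ
      rw [hFdef]
      simp only [polar_symm_eq]
      rw [← ENNReal.ofReal_mul hs0.le]
    have hint : IntegrableOn (fun θ => s * gradSq v (P2 (s*Real.cos θ, s*Real.sin θ)))
        (Ioo (-π) π) :=
      ((continuous_const.mul hGc).integrableOn_Icc).mono_set Ioo_subset_Icc_self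
    have hnn : 0 ≤ᵐ[volume.restrict (Ioo (-π) π)]
        fun θ => s * gradSq v (P2 (s*Real.cos θ, s*Real.sin θ)) :=
      Filter.Eventually.of_forall (fun θ => mul_nonneg hs0.le (hGnn _))
    have heq : ∫⁻ θ in Ioo (-π) π, F (s, θ)
        = ENNReal.ofReal (∫ θ in Ioo (-π) π, s * gradSq v (P2 (s*Real.cos θ, s*Real.sin θ))) := by
      rw [ofReal_integral_eq_lintegral_ofReal hint hnn]
      exact lintegral_congr (fun θ => (hFs θ))
    rw [heq]
    apply ENNReal.ofReal_le_ofReal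
    have hIoo : ∫ θ in Ioo (-π) π, s * gradSq v (P2 (s*Real.cos θ, s*Real.sin θ))
        = ∫ θ in (-π)..π, s * gradSq v (P2 (s*Real.cos θ, s*Real.sin θ)) := by
      rw [intervalIntegral.integral_of_le (by linarith), integral_Ioc_eq_integral_Ioo]
    rw [hIoo, intervalIntegral.integral_const_mul]
    set Q := ∫ θ in (-π)..π, gradSq v (P2 (s*Real.cos θ, s*Real.sin θ)) with hQdef
    have hQ0 : 0 ≤ Q := intervalIntegral.integral_nonneg (by linarith) (fun t _ => hGnn _)
    have hrw : D^2/(2*π) * s⁻¹ = D^2/(2*π*s) := by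
      field_simp
    rw [hrw, div_le_iff₀ (by positivity)]
    nlinarith [hA]
  -- measurability of F
  have hsymm_meas : Measurable (⇑polarCoord.symm : ℝ×ℝ → ℝ×ℝ) := by
    have h : (⇑polarCoord.symm : ℝ×ℝ → ℝ×ℝ)
        = fun p => (p.1*Real.cos p.2, p.1*Real.sin p.2) := funext polar_symm_eq
    rw [h]; fun_prop
  have hFmeas : Measurable F := by
    apply (measurable_fst.ennreal_ofReal).mul
    exact ((hGmeas.comp P2.measurable).comp hsymm_meas).ennreal_ofReal
  have hprod : (volume : Measure (ℝ×ℝ)).restrict (Ioo r 1 ×ˢ Ioo (-π) π)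
      = ((volume : Measure ℝ).restrict (Ioo r 1)).prod
        ((volume : Measure ℝ).restrict (Ioo (-π) π)) := by
    rw [Measure.volume_eq_prod, Measure.prod_restrict]
  have hfub : ∫⁻ p in Ioo r 1 ×ˢ Ioo (-π) π, F p
      = ∫⁻ s in Ioo r 1, ∫⁻ θ in Ioo (-π) π, F (s, θ) := by
    rw [hprod]
    exact lintegral_prod F hFmeas.aemeasurable
  have hmarg : Measurable fun s : ℝ => ∫⁻ θ in Ioo (-π) π, F (s, θ) :=
    Measurable.lintegral_prod_right (f := fun s θ => F (s, θ)) hFmeas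
  have hstepD : ∫⁻ s in Ioo r 1, ENNReal.ofReal (D^2/(2*π) * s⁻¹)
      ≤ ∫⁻ s in Ioo r 1, ∫⁻ θ in Ioo (-π) π, F (s, θ) :=
    setLIntegral_mono hmarg stepB
  have hint2 : IntegrableOn (fun s : ℝ => D^2/(2*π) * s⁻¹) (Ioo r 1) := by
    apply (ContinuousOn.integrableOn_Icc ?_).mono_set Ioo_subset_Icc_self
    apply ContinuousOn.mul continuousOn_const
    apply ContinuousOn.inv₀ continuousOn_id
    intro t ht
    exact ne_of_gt (lt_of_lt_of_le hr0 ht.1)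
  have hnn2 : 0 ≤ᵐ[volume.restrict (Ioo r 1)] fun s : ℝ => D^2/(2*π) * s⁻¹ := by
    filter_upwards [ae_restrict_mem measurableSet_Ioo] with t ht
    have h0t : 0 < t := hr0.trans ht.1
    positivity
  have hE1 : ∫⁻ s in Ioo r 1, ENNReal.ofReal (D^2/(2*π) * s⁻¹)
      = ENNReal.ofReal (∫ s in Ioo r 1, D^2/(2*π) * s⁻¹) :=
    (ofReal_integral_eq_lintegral_ofReal hint2 hnn2).symm
  have hE2 : ∫ s in Ioo r 1, D^2/(2*π) * s⁻¹ = D^2/(2*π) * L := by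
    rw [← integral_Ioc_eq_integral_Ioo, ← intervalIntegral.integral_of_le hr1.le]
    rw [intervalIntegral.integral_const_mul, integral_inv_of_pos hr0 one_pos]
    rw [hLdef, show (1:ℝ)/r = r⁻¹ by ring, Real.log_inv]
  have hchain : ENNReal.ofReal (D^2/(2*π) * L) ≤ Einf := by
    calc ENNReal.ofReal (D^2/(2*π) * L)
        = ∫⁻ s in Ioo r 1, ENNReal.ofReal (D^2/(2*π) * s⁻¹) := by rw [hE1, hE2]
      _ ≤ ∫⁻ s in Ioo r 1, ∫⁻ θ in Ioo (-π) π, F (s, θ) := hstepD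
      _ = ∫⁻ p in Ioo r 1 ×ˢ Ioo (-π) π, F p := hfub.symm
      _ ≤ Einf := energy_lower (gradSq v) hr0 hr1
  have hreal : D^2/(2*π) * L ≤ Er := by
    rw [hErdef]
    exact (ENNReal.ofReal_le_iff_le_toReal hEfin).1 hchain
  have hD2 : D^2 ≤ 2*π*Er/L := by
    rw [le_div_iff₀ hLpos]
    have h2 := mul_le_mul_of_nonneg_left hreal (by positivity : (0:ℝ) ≤ 2*π)
    have h3 : 2*π * (D^2/(2*π) * L) = D^2 * L := by
      field_simp
    calc D^2 * L = 2*π * (D^2/(2*π) * L) := h3.symm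
      _ ≤ 2*π*Er := h2
  have hDle : D ≤ Real.sqrt (2*π*Er/L) := by
    rw [show D = Real.sqrt (D^2) by rw [Real.sqrt_sq hD0]]
    exact Real.sqrt_le_sqrt hD2
  calc D ≤ Real.sqrt (2*π*Er/L) := hDle
    _ = Real.sqrt (2*π) * Real.sqrt Er / Real.sqrt L := by
        rw [Real.sqrt_div (by positivity) L, Real.sqrt_mul (by positivity) Er]
    _ = Real.sqrt (2*π) / Real.sqrt L * Real.sqrt Er := by ring
end
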